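/- arXiv:1809.03430 — 3 statements merged into one kernel-verified Lean document; each statement's English description precedes it below -/
import Mathlib

section
/- Let $u$ and $m$ be probability densities on a bounded domain $\Omega$, and suppose $m_c$ is a measurable function with $m_c \le m - \eta$ on $\Omega$ for some constant $\eta > 0$. Then $\int_{[u > m]} (u - m)\,dx \ge \eta \, |[u \le m_c]|$, where $|\cdot|$ denotes Lebesgue measure. -/
open MeasureTheory

/-- If `u`, `m` are probability densities on `Ω` and `m_c ≤ m - η` on `Ω`,
then `∫_{[u>m]} (u-m) ≥ η |[u ≤ m_c]|`. -/
theorem mass_excess_lower_bound {d : ℕ} (Ω : Set (Fin d → ℝ))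
    (hΩ : MeasurableSet Ω) (hΩbd : Bornology.IsBounded Ω)
    (u m mc : (Fin d → ℝ) → ℝ)
    (hu_meas : Measurable u) (hm_meas : Measurable m) (hmc_meas : Measurable mc)
    (hu_nonneg : ∀ x ∈ Ω, 0 ≤ u x) (hm_nonneg : ∀ x ∈ Ω, 0 ≤ m x)
    (hmc_nonneg : ∀ x ∈ Ω, 0 ≤ mc x)
    (hu_int : IntegrableOn u Ω) (hm_int : IntegrableOn m Ω)
    (hu_mass : ∫ x in Ω, u x = 1) (hm_mass : ∫ x in Ω, m x = 1)
    (η : ℝ) (hη : 0 < η) (hgap : ∀ x ∈ Ω, mc x ≤ m x - η) :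
    η * (volume {x ∈ Ω | u x ≤ mc x}).toReal
      ≤ ∫ x in {x ∈ Ω | m x < u x}, (u x - m x) := by
  set f : (Fin d → ℝ) → ℝ := fun x => u x - m x with hfdef
  set A := {x ∈ Ω | u x ≤ mc x} with hAdef
  set B := {x ∈ Ω | m x < u x} with hBdef
  have hA_meas : MeasurableSet A := hΩ.inter (measurableSet_le hu_meas hmc_meas)
  have hB_meas : MeasurableSet B := hΩ.inter (measurableSet_lt hm_meas hu_meas)
  have hAΩ : A ⊆ Ω := fun x hx => hx.1
  have hBΩ : B ⊆ Ω := fun x hx => hx.1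
  have hf_int : IntegrableOn f Ω := hu_int.sub hm_int
  have hΩfin : volume Ω < ⊤ := hΩbd.measure_lt_top
  have hAfin : volume A ≠ ⊤ := ((measure_mono hAΩ).trans_lt hΩfin).ne
  -- on A, u ≤ m - η
  have hAub : ∀ x ∈ A, f x ≤ -η := by
    intro x hx
    have := hgap x hx.1
    have := hx.2
    simp only [hfdef]
    linarith
  have hdisj : Disjoint A B := by
    rw [Set.disjoint_left]
    intro x hxA hxB
    have h1 := hgap x hxA.1
    have h2 := hxA.2
    have h3 := hxB.2
    linarith
  have hABΩ : A ∪ B ⊆ Ω := Set.union_subset hAΩ hBΩ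
  set C := Ω \ (A ∪ B) with hCdef
  have hC_meas : MeasurableSet C := hΩ.diff (hA_meas.union hB_meas)
  -- total integral zero
  have htot : ∫ x in Ω, f x = 0 := by
    have : ∫ x in Ω, f x = (∫ x in Ω, u x) - ∫ x in Ω, m x :=
      integral_sub hu_int hm_int
    rw [this, hu_mass, hm_mass]; ring
  -- split
  have hsplit : ∫ x in Ω, f x =
      (∫ x in A, f x) + (∫ x in B, f x) + (∫ x in C, f x) := by
    have h1 : ∫ x in A ∪ B, f x = (∫ x in A, f x) + (∫ x in B, f x) :=
      setIntegral_union hdisj hB_meas (hf_int.mono_set hAΩ) (hf_int.mono_set hBΩ)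
    have h2 : Ω = (A ∪ B) ∪ C := by
      rw [hCdef, Set.union_diff_cancel hABΩ]
    have h3 : Disjoint (A ∪ B) C := Set.disjoint_sdiff_right
    calc ∫ x in Ω, f x = ∫ x in (A ∪ B) ∪ C, f x := by rw [← h2]
      _ = (∫ x in A ∪ B, f x) + ∫ x in C, f x := by
          exact setIntegral_union h3 hC_meas (hf_int.mono_set hABΩ)
            (hf_int.mono_set (Set.diff_subset))
      _ = (∫ x in A, f x) + (∫ x in B, f x) + ∫ x in C, f x := by rw [h1]
  have hIA : ∫ x in A, f x ≤ -η * (volume A).toReal := by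
    have : ∫ x in A, f x ≤ ∫ _x in A, (-η) :=
      setIntegral_mono_on (hf_int.mono_set hAΩ) (integrableOn_const
        ((measure_mono hAΩ).trans_lt hΩfin).ne) hA_meas hAub
    simpa [setIntegral_const, mul_comm, Measure.real] using this
  have hIC : ∫ x in C, f x ≤ 0 := by
    apply setIntegral_nonpos hC_meas
    intro x hx
    have hxΩ : x ∈ Ω := hx.1
    have hxnB : x ∉ B := fun h => hx.2 (Or.inr h)
    have : ¬ m x < u x := fun h => hxnB ⟨hxΩ, h⟩
    simp only [hfdef]
    linarith [not_lt.1 this]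
  have := hsplit ▸ htot
  linarith
end

section
/- Let $u$ and $m$ be probability densities on a bounded domain $\Omega$ with $m$ bounded, and let $m_c$ be a measurable function with $m_c \ge m + \eta$ on $\Omega$ for some $\eta > 0$. Then $|[u < m]| \ge \frac{\eta}{\sup_\Omega m} \, |[u \ge m_c]|$. -/
open MeasureTheory

/-- If `u`, `m` are probability densities on `Ω`, `m` bounded with supremum `S`,
and `m_c ≥ m + η` on `Ω`, then `|[u < m]| ≥ (η / S) |[u ≥ m_c]|`. -/
theorem sublevel_measure_lower_bound {d : ℕ} (Ω : Set (Fin d → ℝ))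
    (hΩ : MeasurableSet Ω) (hΩbd : Bornology.IsBounded Ω)
    (u m mc : (Fin d → ℝ) → ℝ)
    (hu_meas : Measurable u) (hm_meas : Measurable m) (hmc_meas : Measurable mc)
    (hu_nonneg : ∀ x ∈ Ω, 0 ≤ u x) (hm_nonneg : ∀ x ∈ Ω, 0 ≤ m x)
    (hmc_nonneg : ∀ x ∈ Ω, 0 ≤ mc x)
    (hu_int : IntegrableOn u Ω) (hm_int : IntegrableOn m Ω)
    (hu_mass : ∫ x in Ω, u x = 1) (hm_mass : ∫ x in Ω, m x = 1)
    (η : ℝ) (hη : 0 < η) (hgap : ∀ x ∈ Ω, m x + η ≤ mc x)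
    (S : ℝ) (hS : 0 < S) (hS_lub : IsLUB (m '' Ω) S) :
    (η / S) * (volume {x ∈ Ω | mc x ≤ u x}).toReal
      ≤ (volume {x ∈ Ω | u x < m x}).toReal := by
  set A : Set (Fin d → ℝ) := {x ∈ Ω | u x < m x} with hA
  set B : Set (Fin d → ℝ) := {x ∈ Ω | mc x ≤ u x} with hB
  have hAmeas : MeasurableSet A := hΩ.inter (measurableSet_lt hu_meas hm_meas)
  have hBmeas : MeasurableSet B := hΩ.inter (measurableSet_le hmc_meas hu_meas)
  have hAsub : A ⊆ Ω := fun x hx => hx.1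
  have hBsub : B ⊆ Ω := fun x hx => hx.1
  have hΩfin : volume Ω < ⊤ := hΩbd.measure_lt_top
  have hAfin : volume A < ⊤ := lt_of_le_of_lt (measure_mono hAsub) hΩfin
  have hBfin : volume B < ⊤ := lt_of_le_of_lt (measure_mono hBsub) hΩfin
  -- B ⊆ Ω \ A
  have hBsubc : B ⊆ Ω \ A := by
    intro x hx
    refine ⟨hx.1, fun hxA => ?_⟩
    have h1 := hgap x hx.1
    have h2 := hx.2
    have := hxA.2
    linarith
  have hint_sub : IntegrableOn (fun x => u x - m x) Ω := hu_int.sub hm_int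
  have hintA : IntegrableOn (fun x => u x - m x) A := hint_sub.mono_set hAsub
  have hintAc : IntegrableOn (fun x => u x - m x) (Ω \ A) :=
    hint_sub.mono_set Set.diff_subset
  have hintB : IntegrableOn (fun x => u x - m x) B := hint_sub.mono_set hBsub
  have hmS : ∀ x ∈ Ω, m x ≤ S := fun x hx => hS_lub.1 ⟨x, hx, rfl⟩
  -- key chain
  have h1 : η * (volume B).toReal ≤ ∫ x in B, (u x - m x) := by
    have : ∫ x in B, η ≤ ∫ x in B, (u x - m x) := by
      apply setIntegral_mono_on (integrableOn_const hBfin.ne) hintB hBmeas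
      intro x hx
      have := hgap x hx.1
      have := hx.2
      linarith
    simpa [mul_comm, Measure.real] using this
  have h2 : ∫ x in B, (u x - m x) ≤ ∫ x in Ω \ A, (u x - m x) := by
    apply setIntegral_mono_set hintAc ?_ (Filter.Eventually.of_forall hBsubc)
    filter_upwards [self_mem_ae_restrict (hΩ.diff hAmeas)] with x hx
    have h : ¬ u x < m x := fun h => hx.2 ⟨hx.1, h⟩
    show (0:ℝ) ≤ u x - m x
    linarith [not_lt.mp h]
  have hsplit : (∫ x in A, (u x - m x)) + (∫ x in Ω \ A, (u x - m x))
      = ∫ x in Ω, (u x - m x) := by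
    rw [← setIntegral_union (Set.disjoint_sdiff_right) (hΩ.diff hAmeas) hintA hintAc,
      Set.union_diff_cancel hAsub]
  have hΩzero : ∫ x in Ω, (u x - m x) = 0 := by
    rw [integral_sub hu_int hm_int, hu_mass, hm_mass]; ring
  have h3 : ∫ x in Ω \ A, (u x - m x) = ∫ x in A, (m x - u x) := by
    have : ∫ x in A, (m x - u x) = - ∫ x in A, (u x - m x) := by
      rw [← integral_neg]; congr 1; ext x; ring
    rw [this]; linarith [hsplit, hΩzero]
  have h4 : ∫ x in A, (m x - u x) ≤ S * (volume A).toReal := by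
    have : ∫ x in A, (m x - u x) ≤ ∫ x in A, S := by
      have hintA' : IntegrableOn (fun x => m x - u x) A := by
        exact (hm_int.mono_set hAsub).sub (hu_int.mono_set hAsub)
      apply setIntegral_mono_on hintA' (integrableOn_const hAfin.ne) hAmeas
      intro x hx
      have := hmS x hx.1
      have := hu_nonneg x hx.1
      linarith
    simpa [mul_comm, Measure.real] using this
  have key : η * (volume B).toReal ≤ S * (volume A).toReal := by
    calc η * (volume B).toReal ≤ ∫ x in B, (u x - m x) := h1
      _ ≤ ∫ x in Ω \ A, (u x - m x) := h2
      _ = ∫ x in A, (m x - u x) := h3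
      _ ≤ S * (volume A).toReal := h4
  rw [div_mul_eq_mul_div, div_le_iff₀ hS]
  linarith [key]
end

section
/- (Structure of Lemma 2.11's key estimate.) Suppose $f \colon \overline\Omega \times (0,\infty) \to \mathbb{R}$ satisfies: there is $\lambda > 0$ such that $\xi |f(x,\xi)| \ge \lambda(\xi - m(x))$ whenever $\xi > m(x)$, where $m$ is a probability density. Then for any probability density $u$ on $\Omega$ and any $a \ge 0$, $\int_{[u>m]} (u - m)\,dx \le \lambda^{-1} \big(\int_{[u>m]} u(f(x,u) - a)^2\,dx\big)^{1/2}$. -/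
open MeasureTheory

/-- Key estimate of Lemma 2.11: if `ξ |f(x,ξ)| ≥ λ (ξ - m(x))` for `ξ > m(x)`,
`u` and `m` are probability densities and `a ≥ 0`, then
`∫_{[u>m]} (u-m) ≤ λ⁻¹ (∫_{[u>m]} u (f(x,u)-a)²)^{1/2}`. -/
theorem mass_excess_entropy_production_bound {d : ℕ} (Ω : Set (Fin d → ℝ))
    (hΩ : MeasurableSet Ω) (hΩbd : Bornology.IsBounded Ω)
    (f : (Fin d → ℝ) → ℝ → ℝ) (m u : (Fin d → ℝ) → ℝ)
    (hm_meas : Measurable m) (hu_meas : Measurable u)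
    (hf_meas : Measurable fun x => f x (u x))
    (hm_nonneg : ∀ x ∈ Ω, 0 ≤ m x) (hu_nonneg : ∀ x ∈ Ω, 0 ≤ u x)
    (hm_int : IntegrableOn m Ω) (hu_int : IntegrableOn u Ω)
    (hm_mass : ∫ x in Ω, m x = 1) (hu_mass : ∫ x in Ω, u x = 1)
    (hf_eq : ∀ x ∈ Ω, f x (m x) = 0)
    (hf_neg : ∀ x ∈ Ω, ∀ ξ : ℝ, m x < ξ → f x ξ < 0)
    (lam : ℝ) (hlam : 0 < lam)
    (hlow : ∀ x ∈ Ω, ∀ ξ : ℝ, m x < ξ → lam * (ξ - m x) ≤ ξ * |f x ξ|)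
    (a : ℝ) (ha : 0 ≤ a)
    (hint : IntegrableOn (fun x => u x * (f x (u x) - a) ^ 2)
      {x ∈ Ω | m x < u x}) :
    ∫ x in {x ∈ Ω | m x < u x}, (u x - m x)
      ≤ lam⁻¹ *
        Real.sqrt (∫ x in {x ∈ Ω | m x < u x}, u x * (f x (u x) - a) ^ 2) := by
  set S : Set (Fin d → ℝ) := {x ∈ Ω | m x < u x} with hSdef
  have hS : MeasurableSet S := hΩ.inter (measurableSet_lt hm_meas hu_meas)
  set μ := (volume : Measure (Fin d → ℝ)).restrict S with hμ
  have hmem : ∀ᵐ x ∂μ, x ∈ S := ae_restrict_mem hS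
  -- the functions for Cauchy–Schwarz
  set g : (Fin d → ℝ) → ℝ := fun x => Real.sqrt (u x) with hg
  set h : (Fin d → ℝ) → ℝ := fun x => Real.sqrt (u x) * |f x (u x) - a| with hh
  have hg_meas : Measurable g := Real.continuous_sqrt.measurable.comp hu_meas
  have hh_meas : Measurable h :=
    hg_meas.mul ((hf_meas.sub measurable_const).abs)
  have hSsub : S ⊆ Ω := fun x hx => hx.1
  have huS : IntegrableOn u S := hu_int.mono_set hSsub
  -- pointwise facts on S
  have hgsq : ∀ᵐ x ∂μ, g x ^ 2 = u x := by
    filter_upwards [hmem] with x hx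
    exact Real.sq_sqrt (hu_nonneg x hx.1)
  have hhsq : ∀ᵐ x ∂μ, h x ^ 2 = u x * (f x (u x) - a) ^ 2 := by
    filter_upwards [hmem] with x hx
    rw [hh, mul_pow, Real.sq_sqrt (hu_nonneg x hx.1), sq_abs]
  have hgh : ∀ᵐ x ∂μ, g x * h x = u x * |f x (u x) - a| := by
    filter_upwards [hmem] with x hx
    rw [hg, hh, ← mul_assoc, Real.mul_self_sqrt (hu_nonneg x hx.1)]
  -- Memℒp facts
  have hg2 : MemLp g 2 μ := by
    rw [memLp_two_iff_integrable_sq hg_meas.aestronglyMeasurable]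
    exact (integrable_congr hgsq).mpr huS
  have hh2 : MemLp h 2 μ := by
    rw [memLp_two_iff_integrable_sq hh_meas.aestronglyMeasurable]
    exact (integrable_congr hhsq).mpr hint
  -- Cauchy–Schwarz
  have hpq : Real.HolderConjugate 2 2 := Real.holderConjugate_iff.mpr ⟨one_lt_two, by norm_num⟩
  have hof : ENNReal.ofReal (2 : ℝ) = 2 := by
    simp [ENNReal.ofReal_ofNat]
  have hCS := integral_mul_le_Lp_mul_Lq_of_nonneg (μ := μ) hpq
    (Filter.Eventually.of_forall fun x => Real.sqrt_nonneg _)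
    (Filter.Eventually.of_forall fun x =>
      mul_nonneg (Real.sqrt_nonneg _) (abs_nonneg _))
    (hof ▸ hg2) (hof ▸ hh2)
  have hrpow2 : ∀ y : ℝ, y ^ (2 : ℝ) = y ^ 2 := fun y => by
    rw [show (2 : ℝ) = ((2 : ℕ) : ℝ) by norm_num, Real.rpow_natCast]
  -- rewrite the Cauchy–Schwarz inequality
  have hintg2 : ∫ x, g x ^ (2 : ℝ) ∂μ = ∫ x, u x ∂μ := by
    refine integral_congr_ae ?_
    filter_upwards [hgsq] with x hx
    rw [hrpow2, hx]
  have hinth2 : ∫ x, h x ^ (2 : ℝ) ∂μ = ∫ x, u x * (f x (u x) - a) ^ 2 ∂μ := by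
    refine integral_congr_ae ?_
    filter_upwards [hhsq] with x hx
    rw [hrpow2, hx]
  have hintgh : ∫ x, g x * h x ∂μ = ∫ x, u x * |f x (u x) - a| ∂μ :=
    integral_congr_ae hgh
  rw [hintg2, hinth2, hintgh] at hCS
  -- ∫_S u ≤ 1
  have huS_le : ∫ x, u x ∂μ ≤ 1 := by
    rw [← hu_mass]
    exact setIntegral_mono_set hu_int
      ((ae_restrict_mem hΩ).mono fun x hx => hu_nonneg x hx)
      (Filter.Eventually.of_forall hSsub)
  have huS_nonneg : 0 ≤ ∫ x, u x ∂μ :=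
    integral_nonneg_of_ae (hmem.mono fun x hx => hu_nonneg x hx.1)
  have hI_nonneg : 0 ≤ ∫ x, u x * (f x (u x) - a) ^ 2 ∂μ :=
    integral_nonneg_of_ae (hmem.mono fun x hx =>
      mul_nonneg (hu_nonneg x hx.1) (sq_nonneg _))
  -- combine: ∫ u|f-a| ≤ sqrt (∫ u (f-a)^2)
  have hsqrt : ∫ x, u x * |f x (u x) - a| ∂μ
      ≤ Real.sqrt (∫ x, u x * (f x (u x) - a) ^ 2 ∂μ) := by
    refine hCS.trans ?_
    rw [Real.sqrt_eq_rpow]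
    have h1 : (∫ x, u x ∂μ) ^ ((1 : ℝ) / 2) ≤ 1 := by
      calc (∫ x, u x ∂μ) ^ ((1 : ℝ) / 2) ≤ (1 : ℝ) ^ ((1 : ℝ) / 2) :=
            Real.rpow_le_rpow huS_nonneg huS_le (by norm_num)
        _ = 1 := Real.one_rpow _
    calc (∫ x, u x ∂μ) ^ ((1 : ℝ) / 2)
          * (∫ x, u x * (f x (u x) - a) ^ 2 ∂μ) ^ ((1 : ℝ) / 2)
        ≤ 1 * (∫ x, u x * (f x (u x) - a) ^ 2 ∂μ) ^ ((1 : ℝ) / 2) := by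
          exact mul_le_mul_of_nonneg_right h1 (Real.rpow_nonneg hI_nonneg _)
      _ = (∫ x, u x * (f x (u x) - a) ^ 2 ∂μ) ^ ((1 : ℝ) / 2) := one_mul _
  -- integrability of u|f-a| on S
  have habs_int : Integrable (fun x => u x * |f x (u x) - a|) μ := by
    refine Integrable.mono' ((huS.add hint).div_const 2)
      (hu_meas.mul (hf_meas.sub measurable_const).abs).aestronglyMeasurable ?_
    filter_upwards [hmem] with x hx
    have hu0 : 0 ≤ u x := hu_nonneg x hx.1
    rw [Real.norm_of_nonneg (mul_nonneg hu0 (abs_nonneg _))]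
    have h2 : |f x (u x) - a| ≤ (1 + (f x (u x) - a) ^ 2) / 2 := by
      nlinarith [sq_nonneg (|f x (u x) - a| - 1), sq_abs (f x (u x) - a),
        abs_nonneg (f x (u x) - a)]
    calc u x * |f x (u x) - a| ≤ u x * ((1 + (f x (u x) - a) ^ 2) / 2) :=
          mul_le_mul_of_nonneg_left h2 hu0
      _ = (u x + u x * (f x (u x) - a) ^ 2) / 2 := by ring
  -- first pointwise step: u - m ≤ lam⁻¹ * (u |f - a|)
  have hstep1 : ∫ x, (u x - m x) ∂μ
      ≤ lam⁻¹ * ∫ x, u x * |f x (u x) - a| ∂μ := by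
    rw [← integral_const_mul]
    refine integral_mono_ae ((hu_int.mono_set hSsub).sub (hm_int.mono_set hSsub))
      (habs_int.const_mul _) ?_
    filter_upwards [hmem] with x hx
    have hxΩ : x ∈ Ω := hx.1
    have hlt : m x < u x := hx.2
    have hfneg : f x (u x) < 0 := hf_neg x hxΩ _ hlt
    have habs : |f x (u x)| ≤ |f x (u x) - a| := by
      rw [abs_of_neg hfneg, abs_of_neg (by linarith : f x (u x) - a < 0)]
      linarith
    have hu0 : 0 ≤ u x := hu_nonneg x hxΩ
    have hkey : lam * (u x - m x) ≤ u x * |f x (u x) - a| :=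
      (hlow x hxΩ _ hlt).trans (mul_le_mul_of_nonneg_left habs hu0)
    rw [inv_mul_eq_div, le_div_iff₀ hlam]
    linarith [hkey]
  calc ∫ x, (u x - m x) ∂μ ≤ lam⁻¹ * ∫ x, u x * |f x (u x) - a| ∂μ := hstep1
    _ ≤ lam⁻¹ * Real.sqrt (∫ x, u x * (f x (u x) - a) ^ 2 ∂μ) :=
        mul_le_mul_of_nonneg_left hsqrt (inv_nonneg.mpr hlam.le)
end
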